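/- Let R be a commutative strongly ℤ-graded ring with grading 𝒜. For all k, ℓ ∈ ℤ, the 𝒜 0-linear map R_{≤ℓ} ⊗[𝒜 0] 𝒜 k → R_{≤ℓ+k} induced by multiplication (r ⊗ s ↦ r·s) is bijective. -/
import Mathlib


open TensorProduct

/-- A ℤ-graded ring is *strongly graded* if `𝒜 i * 𝒜 j = 𝒜 (i + j)` for all `i j`. -/
def IsStronglyGraded {R : Type*} [Ring R] (𝒜 : ℤ → Submodule ℤ R) : Prop :=
  ∀ i j : ℤ, 𝒜 i * 𝒜 j = 𝒜 (i + j)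

variable {R : Type*} [CommRing R] (𝒜 : ℤ → Submodule ℤ R) [GradedRing 𝒜]

/-- `R_{≤k}`, the sum of the homogeneous components of degree at most `k`. -/
def Rle (k : ℤ) : Submodule ℤ R := ⨆ n ≤ k, 𝒜 n

theorem Rle_mul_Rle (a b : ℤ) : Rle 𝒜 a * Rle 𝒜 b ≤ Rle 𝒜 (a + b) := by
  rw [Rle, Rle, Submodule.iSup_mul]
  refine iSup_le fun n => ?_
  rw [Submodule.iSup_mul]
  refine iSup_le fun hn => ?_
  rw [Submodule.mul_iSup]
  refine iSup_le fun m => ?_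
  rw [Submodule.mul_iSup]
  refine iSup_le fun hm => ?_
  refine le_trans (Submodule.mul_le.2 fun x hx y hy => SetLike.mul_mem_graded hx hy) ?_
  exact le_iSup₂_of_le (n + m) (add_le_add hn hm) le_rfl

/-- The homogeneous component `𝒜 n` is a module over the subring `𝒜 0`,
with the action given by multiplication in `R`. -/
instance gradeLeftModule (n : ℤ) : Module (𝒜 0) (𝒜 n) where
  smul a x := ⟨(a : R) * x, by simpa using SetLike.mul_mem_graded a.2 x.2⟩
  one_smul x := Subtype.ext (one_mul _)
  mul_smul a b x := Subtype.ext (mul_assoc _ _ _)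
  smul_zero a := Subtype.ext (mul_zero _)
  smul_add a x y := Subtype.ext (mul_add _ _ _)
  add_smul a b x := Subtype.ext (add_mul _ _ _)
  zero_smul x := Subtype.ext (zero_mul _)

/-- `R_{≤k}` is a module over the subring `𝒜 0`, the action being
multiplication in `R`. -/
instance RleGradeZeroModule (k : ℤ) : Module (𝒜 0) (Rle 𝒜 k) where
  smul a x := ⟨(a : R) * x, by
    simpa using Rle_mul_Rle 𝒜 0 k (Submodule.mul_mem_mul
      (Submodule.mem_iSup_of_mem 0 (Submodule.mem_iSup_of_mem le_rfl a.2)) x.2)⟩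
  one_smul x := Subtype.ext (one_mul _)
  mul_smul a b x := Subtype.ext (mul_assoc _ _ _)
  smul_zero a := Subtype.ext (mul_zero _)
  smul_add a x y := Subtype.ext (mul_add _ _ _)
  add_smul a b x := Subtype.ext (add_mul _ _ _)
  zero_smul x := Subtype.ext (zero_mul _)

@[simp] lemma coe_smul_grade (n : ℤ) (a : 𝒜 0) (x : 𝒜 n) :
    ((a • x : 𝒜 n) : R) = (a : R) * x := rfl

@[simp] lemma coe_smul_Rle (k : ℤ) (a : 𝒜 0) (x : Rle 𝒜 k) :
    ((a • x : Rle 𝒜 k) : R) = (a : R) * x := rfl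

lemma mem_Rle_self (k : ℤ) {x : R} (hx : x ∈ 𝒜 k) : x ∈ Rle 𝒜 k :=
  Submodule.mem_iSup_of_mem k (Submodule.mem_iSup_of_mem le_rfl hx)

lemma mul_mem_Rle (k l : ℤ) (x : Rle 𝒜 (l + k)) (u : 𝒜 (-k)) :
    (x : R) * (u : R) ∈ Rle 𝒜 l := by
  have := Rle_mul_Rle 𝒜 (l + k) (-k)
    (Submodule.mul_mem_mul x.2 (mem_Rle_self 𝒜 (-k) u.2))
  simpa using this

lemma exists_repr_one (h : IsStronglyGraded 𝒜) (k : ℤ) :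
    ∃ (n : ℕ) (v : Fin n → 𝒜 k) (u : Fin n → 𝒜 (-k)),
      ∑ i, (v i : R) * (u i : R) = 1 := by
  have h1 : (1 : R) ∈ 𝒜 k * 𝒜 (-k) := by
    rw [h k (-k), add_neg_cancel]
    exact SetLike.one_mem_graded 𝒜
  have key : ∀ x ∈ 𝒜 k * 𝒜 (-k), ∃ (n : ℕ) (v : Fin n → 𝒜 k) (u : Fin n → 𝒜 (-k)),
      ∑ i, (v i : R) * (u i : R) = x := by
    intro x hx
    refine Submodule.mul_induction_on hx ?_ ?_
    · intro m hm p hp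
      exact ⟨1, fun _ => ⟨m, hm⟩, fun _ => ⟨p, hp⟩, by simp⟩
    · rintro x y ⟨n1, v1, u1, h1⟩ ⟨n2, v2, u2, h2⟩
      refine ⟨n1 + n2, Fin.append v1 v2, Fin.append u1 u2, ?_⟩
      rw [Fin.sum_univ_add]
      simp [h1, h2]
  exact key 1 h1

/-- For a commutative strongly ℤ-graded ring, the `𝒜 0`-linear map
`R_{≤ℓ} ⊗[𝒜 0] 𝒜 k → R_{≤ℓ+k}` induced by multiplication is bijective. -/
theorem Rle_tensor_grade_mul_bijective (h : IsStronglyGraded 𝒜) (k l : ℤ)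
    (g : (Rle 𝒜 l ⊗[𝒜 0] 𝒜 k) →ₗ[𝒜 0] Rle 𝒜 (l + k))
    (hg : ∀ (r : Rle 𝒜 l) (s : 𝒜 k), (g (r ⊗ₜ s) : R) = (r : R) * (s : R)) :
    Function.Bijective g := by
  obtain ⟨n, v, u, hvu⟩ := exists_repr_one 𝒜 h k
  -- the inverse map
  let f : Rle 𝒜 (l + k) →ₗ[𝒜 0] (Rle 𝒜 l ⊗[𝒜 0] 𝒜 k) :=
    { toFun := fun x => ∑ i, (⟨(x : R) * (u i : R), mul_mem_Rle 𝒜 k l x (u i)⟩ : Rle 𝒜 l) ⊗ₜ v i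
      map_add' := by
        intro x y
        rw [← Finset.sum_add_distrib]
        refine Finset.sum_congr rfl fun i _ => ?_
        rw [← TensorProduct.add_tmul]
        congr 1
        exact Subtype.ext (add_mul _ _ _)
      map_smul' := by
        intro a x
        simp only [RingHom.id_apply, Finset.smul_sum, TensorProduct.smul_tmul']
        refine Finset.sum_congr rfl fun i _ => ?_
        congr 1
        exact Subtype.ext (mul_assoc _ _ _) }
  have hf : ∀ x : Rle 𝒜 (l + k),
      f x = ∑ i, (⟨(x : R) * (u i : R), mul_mem_Rle 𝒜 k l x (u i)⟩ : Rle 𝒜 l) ⊗ₜ v i := fun _ => rfl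
  have hgf : Function.RightInverse f g := by
    intro x
    apply Subtype.ext
    rw [hf, map_sum]
    calc ((∑ i, g ((⟨(x : R) * (u i : R), mul_mem_Rle 𝒜 k l x (u i)⟩ : Rle 𝒜 l) ⊗ₜ v i) : Rle 𝒜 (l + k)) : R)
        = ∑ i, ((x : R) * (u i : R)) * (v i : R) := by
          rw [Submodule.coe_sum]
          exact Finset.sum_congr rfl fun i _ => hg _ _
      _ = (x : R) * ∑ i, (v i : R) * (u i : R) := by
          rw [Finset.mul_sum]
          exact Finset.sum_congr rfl fun i _ => by ring
      _ = (x : R) := by rw [hvu, mul_one]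
  have hfg : Function.LeftInverse f g := by
    intro t
    have : (f.comp g) t = (LinearMap.id (R := 𝒜 0)) t := by
      refine LinearMap.congr_fun (TensorProduct.ext' fun r s => ?_) t
      rw [LinearMap.comp_apply, LinearMap.id_apply, hf]
      have mem0 : ∀ i, (s : R) * (u i : R) ∈ 𝒜 0 := fun i => by
        simpa using SetLike.mul_mem_graded s.2 (u i).2
      have step : ∀ i, (⟨((g (r ⊗ₜ s) : Rle 𝒜 (l + k)) : R) * (u i : R),
          mul_mem_Rle 𝒜 k l _ (u i)⟩ : Rle 𝒜 l) ⊗ₜ v i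
          = r ⊗ₜ[𝒜 0] ((⟨(s : R) * (u i : R), mem0 i⟩ : 𝒜 0) • v i) := by
        intro i
        rw [← TensorProduct.smul_tmul]
        congr 1
        apply Subtype.ext
        show ((g (r ⊗ₜ[𝒜 0] s) : Rle 𝒜 (l + k)) : R) * (u i : R)
          = ((s : R) * (u i : R)) * (r : R)
        rw [hg]
        ring
      rw [Finset.sum_congr rfl fun i _ => step i, ← TensorProduct.tmul_sum]
      congr 1
      apply Subtype.ext
      rw [Submodule.coe_sum]
      calc (∑ i, (((⟨(s : R) * (u i : R), mem0 i⟩ : 𝒜 0) • v i : 𝒜 k) : R))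
          = (s : R) * ∑ i, (v i : R) * (u i : R) := by
            rw [Finset.mul_sum]
            exact Finset.sum_congr rfl fun i _ => by rw [coe_smul_grade]; ring
        _ = (s : R) := by rw [hvu, mul_one]
    simpa using this
  exact Function.bijective_iff_has_inverse.mpr ⟨f, hfg, hgf⟩
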